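/- For every queue automaton with two queues there exists a queue automaton with a single queue whose process graph is branching bisimilar to that of the two-queue automaton. -/

import Mathlib

/-- A labelled transition system with silent action `τ` modelled as `none`. -/
structure LTS (S A : Type) where
  tr : S → Option A → S → Prop
  fin : S → Prop

/-- Zero or more τ-steps. -/
def LTS.tauStar {S A : Type} (L : LTS S A) : S → S → Prop :=
  Relation.ReflTransGen (fun s t => L.tr s none t)

/-- `s →(a) t` : either `s →a t`, or `a = τ` and `s = t`. -/
def LTS.optStep {S A : Type} (L : LTS S A) (s : S) (a : Option A) (t : S) : Prop :=
  L.tr s a t ∨ (a = none ∧ s = t)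

/-- A symmetric relation `R` is a strong bisimulation. -/
def IsStrongBisim {S A : Type} (L : LTS S A) (R : S → S → Prop) : Prop :=
  (∀ s t, R s t → R t s) ∧
  (∀ s t, R s t →
    (∀ a s', L.tr s a s' → ∃ t', L.tr t a t' ∧ R s' t') ∧
    (L.fin s → L.fin t))

/-- Strong bisimilarity: related by some strong bisimulation. -/
def Bisim {S A : Type} (L : LTS S A) (s t : S) : Prop :=
  ∃ R, IsStrongBisim L R ∧ R s t

/-- A symmetric relation `R` is a branching bisimulation. -/
def IsBranchingBisim {S A : Type} (L : LTS S A) (R : S → S → Prop) : Prop :=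
  (∀ s t, R s t → R t s) ∧
  (∀ s t, R s t →
    (∀ a s', L.tr s a s' →
      ∃ t'' t', L.tauStar t t'' ∧ L.optStep t'' a t' ∧ R s t'' ∧ R s' t') ∧
    (L.fin s → ∃ t', L.tauStar t t' ∧ L.fin t'))

/-- Branching bisimilarity: related by some branching bisimulation. -/
def BBisim {S A : Type} (L : LTS S A) (s t : S) : Prop :=
  ∃ R, IsBranchingBisim L R ∧ R s t

/-- A branching bisimulation between (the states of) two LTSs. -/
def IsBBisimSys {S₁ S₂ A : Type} (L₁ : LTS S₁ A) (L₂ : LTS S₂ A)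
    (R : S₁ → S₂ → Prop) : Prop :=
  (∀ s t, R s t →
    (∀ a s', L₁.tr s a s' →
      ∃ t'' t', L₂.tauStar t t'' ∧ L₂.optStep t'' a t' ∧ R s t'' ∧ R s' t') ∧
    (L₁.fin s → ∃ t', L₂.tauStar t t' ∧ L₂.fin t')) ∧
  (∀ s t, R s t →
    (∀ a t', L₂.tr t a t' →
      ∃ s'' s', L₁.tauStar s s'' ∧ L₁.optStep s'' a s' ∧ R s'' t ∧ R s' t') ∧
    (L₂.fin t → ∃ s', L₁.tauStar s s' ∧ L₁.fin s'))

/-- Two pointed process graphs are branching bisimilar. -/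
def BBisimSys {S₁ S₂ A : Type} (L₁ : LTS S₁ A) (s : S₁) (L₂ : LTS S₂ A) (t : S₂) : Prop :=
  ∃ R, IsBBisimSys L₁ L₂ R ∧ R s t

/-- The head condition of a queue-automaton transition: `ε`, `*`, or a datum. -/
inductive Head (D : Type) where
  | emp : Head D
  | star : Head D
  | data (d : D) : Head D

/-- A queue automaton. -/
structure QA (S A D : Type) where
  tr : S → Option A → Head D → List D → S → Prop
  init : S
  fin : S → Prop

/-- Effect of a transition with head condition `h` enqueueing `δ` on the queue
contents (head of the queue is the rightmost element, enqueueing prepends). -/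
inductive QStep {D : Type} : Head D → List D → List D → List D → Prop
  | emp (δ : List D) : QStep Head.emp δ [] δ
  | data (d : D) (δ ζ : List D) : QStep (Head.data d) δ (ζ ++ [d]) (δ ++ ζ)
  | star (δ ζ : List D) : QStep Head.star δ ζ (δ ++ ζ)

/-- The process graph of a queue automaton. -/
def QA.proc {S A D : Type} (Q : QA S A D) : LTS (S × List D) A where
  tr := fun c a c' => ∃ h δ, Q.tr c.1 a h δ c'.1 ∧ QStep h δ c.2 c'.2
  fin := fun c => Q.fin c.1

/-- The queue automaton has finitely many transitions. -/
def QA.FiniteTrans {S A D : Type} (Q : QA S A D) : Prop :=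
  Set.Finite {x : S × Option A × Head D × List D × S |
    Q.tr x.1 x.2.1 x.2.2.1 x.2.2.2.1 x.2.2.2.2}

/-- A queue automaton with two queues. -/
structure QA2 (S A D : Type) where
  tr : S → Option A → Head D × Head D → List D × List D → S → Prop
  init : S
  fin : S → Prop

/-- The process graph of a two-queue automaton: the one-queue rules are
applied to both queues simultaneously. -/
def QA2.proc {S A D : Type} (Q : QA2 S A D) : LTS (S × List D × List D) A where
  tr := fun c a c' => ∃ h δ, Q.tr c.1 a h δ c'.1 ∧
    QStep h.1 δ.1 c.2.1 c'.2.1 ∧ QStep h.2 δ.2 c.2.2 c'.2.2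
  fin := fun c => Q.fin c.1

/-- The two-queue automaton has finitely many transitions. -/
def QA2.FiniteTrans {S A D : Type} (Q : QA2 S A D) : Prop :=
  Set.Finite {x : S × Option A × (Head D × Head D) × (List D × List D) × S |
    Q.tr x.1 x.2.1 x.2.2.1 x.2.2.2.1 x.2.2.2.2}

namespace TQ

variable {S A D : Type}

abbrev Dd (D : Type) := D ⊕ Bool

def hsh : Dd D := Sum.inr true
def dol : Dd D := Sum.inr false

def enc : List D → List (Dd D) := List.map Sum.inl

@[simp] lemma enc_nil : enc ([] : List D) = [] := rfl
@[simp] lemma enc_append (a b : List D) : enc (a ++ b) = enc a ++ enc b :=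
  List.map_append
@[simp] lemma enc_concat (a : List D) (d : D) :
    enc (a ++ [d]) = enc a ++ [Sum.inl d] := by simp [enc]

abbrev Tup (S A D : Type) := S × Option A × (Head D × Head D) × (List D × List D) × S

def Tr (Q : QA2 S A D) := {x : Tup S A D // Q.tr x.1 x.2.1 x.2.2.1 x.2.2.2.1 x.2.2.2.2}

inductive MSt (Q : QA2 S A D) where
  | ini
  | rest (s : S) (i : Option (Option D))
  | sc1 (s : S)
  | sc2 (s : S)
  | sc3 (s : S) (d : D)
  | qA (t : Tr Q)
  | qB (t : Tr Q)
  | qC (t : Tr Q)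

def compat : Head D → Option (Option D) → Prop
  | Head.star, _ => True
  | Head.emp, i => i = some none
  | Head.data d, i => i = some (some d)

inductive Mtr (Q : QA2 S A D) : MSt Q → Option A → Head (Dd D) → List (Dd D) → MSt Q → Prop
  | t_init : Mtr Q .ini none .emp [hsh] (.rest Q.init none)
  | t_scan (s) : Mtr Q (.rest s none) none .star [dol] (.sc1 s)
  | t_sc1_rot (s x) : Mtr Q (.sc1 s) none (.data (.inl x)) [.inl x] (.sc1 s)
  | t_sc1_hash (s) : Mtr Q (.sc1 s) none (.data hsh) [hsh] (.sc2 s)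
  | t_sc2_emp (s) : Mtr Q (.sc2 s) none (.data dol) [] (.rest s (some none))
  | t_sc2_data (s d) : Mtr Q (.sc2 s) none (.data (.inl d)) [.inl d] (.sc3 s d)
  | t_sc3_rot (s d x) : Mtr Q (.sc3 s d) none (.data (.inl x)) [.inl x] (.sc3 s d)
  | t_sc3_dol (s d) : Mtr Q (.sc3 s d) none (.data dol) [] (.rest s (some (some d)))
  | t_fire_data (t : Tr Q) (i s a h₂ d δ₁n δ₂n s')
      (ht : t.1 = (s, a, (.data d, h₂), (δ₁n, δ₂n), s')) (hc : compat h₂ i) :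
      Mtr Q (.rest s i) a (.data (.inl d)) [dol] (.qA t)
  | t_fire_star (t : Tr Q) (i s a h₂ δ₁n δ₂n s')
      (ht : t.1 = (s, a, (.star, h₂), (δ₁n, δ₂n), s')) (hc : compat h₂ i) :
      Mtr Q (.rest s i) a .star [dol] (.qA t)
  | t_fire_emp (t : Tr Q) (i s a h₂ δ₁n δ₂n s')
      (ht : t.1 = (s, a, (.emp, h₂), (δ₁n, δ₂n), s')) (hc : compat h₂ i) :
      Mtr Q (.rest s i) a (.data hsh) ([hsh] ++ enc δ₁n ++ [dol]) (.qB t)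
  | t_qA_rot (t x) : Mtr Q (.qA t) none (.data (.inl x)) [.inl x] (.qA t)
  | t_qA_hash (t : Tr Q) (s a h₁ h₂ δ₁n δ₂n s')
      (ht : t.1 = (s, a, (h₁, h₂), (δ₁n, δ₂n), s')) :
      Mtr Q (.qA t) none (.data hsh) ([hsh] ++ enc δ₁n) (.qB t)
  | t_qB_data (t : Tr Q) (s a h₁ d δ₁n δ₂n s')
      (ht : t.1 = (s, a, (h₁, .data d), (δ₁n, δ₂n), s')) :
      Mtr Q (.qB t) none (.data (.inl d)) [] (.qC t)
  | t_qB_star (t : Tr Q) (s a h₁ δ₁n δ₂n s')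
      (ht : t.1 = (s, a, (h₁, .star), (δ₁n, δ₂n), s')) :
      Mtr Q (.qB t) none .star [] (.qC t)
  | t_qB_emp (t : Tr Q) (s a h₁ δ₁n δ₂n s')
      (ht : t.1 = (s, a, (h₁, .emp), (δ₁n, δ₂n), s')) :
      Mtr Q (.qB t) none (.data dol) (enc δ₂n) (.rest s' none)
  | t_qC_rot (t x) : Mtr Q (.qC t) none (.data (.inl x)) [.inl x] (.qC t)
  | t_qC_dol (t : Tr Q) (s a h δ₁n δ₂n s')
      (ht : t.1 = (s, a, h, (δ₁n, δ₂n), s')) :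
      Mtr Q (.qC t) none (.data dol) (enc δ₂n) (.rest s' none)

def under (Q : QA2 S A D) : MSt Q → S
  | .ini => Q.init
  | .rest s _ => s
  | .sc1 s => s
  | .sc2 s => s
  | .sc3 s _ => s
  | .qA t => t.1.2.2.2.2
  | .qB t => t.1.2.2.2.2
  | .qC t => t.1.2.2.2.2

def M (Q : QA2 S A D) : QA (MSt Q) A (Dd D) where
  tr := Mtr Q
  init := .ini
  fin := fun m => Q.fin (under Q m)

end TQ
namespace TQ

variable {S A D : Type}

@[simp] lemma enc_cons (d : D) (l : List D) : enc (d :: l) = Sum.inl d :: enc l := rfl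

inductive Rel (Q : QA2 S A D) : (S × List D × List D) → (MSt Q × List (Dd D)) → Prop
  | r_init : Rel Q (Q.init, [], []) (.ini, [])
  | r_rest_u (s δ₁ δ₂) :
      Rel Q (s, δ₁, δ₂) (.rest s none, enc δ₂ ++ [hsh] ++ enc δ₁)
  | r_rest_e (s δ₁) :
      Rel Q (s, δ₁, []) (.rest s (some none), [hsh] ++ enc δ₁)
  | r_rest_d (s δ₁ ζ d) :
      Rel Q (s, δ₁, ζ ++ [d]) (.rest s (some (some d)), enc (ζ ++ [d]) ++ [hsh] ++ enc δ₁)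
  | r_sc1 (s δa δb δ₂) :
      Rel Q (s, δa ++ δb, δ₂) (.sc1 s, enc δb ++ [dol] ++ enc δ₂ ++ [hsh] ++ enc δa)
  | r_sc2 (s δ₁ δ₂) :
      Rel Q (s, δ₁, δ₂) (.sc2 s, [hsh] ++ enc δ₁ ++ [dol] ++ enc δ₂)
  | r_sc3 (s δ₁ ζa ζb d) :
      Rel Q (s, δ₁, ζa ++ ζb ++ [d])
        (.sc3 s d, enc ζb ++ [Sum.inl d] ++ [hsh] ++ enc δ₁ ++ [dol] ++ enc ζa)
  | r_qA (t : Tr Q) (s a h₁ h₂ δ₁n δ₂n s' δa δb δ₂ ζ₂')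
      (ht : t.1 = (s, a, (h₁, h₂), (δ₁n, δ₂n), s')) (h2 : QStep h₂ δ₂n δ₂ ζ₂') :
      Rel Q (s', δ₁n ++ (δa ++ δb), ζ₂') (.qA t, enc δb ++ [dol] ++ enc δ₂ ++ [hsh] ++ enc δa)
  | r_qB (t : Tr Q) (s a h₁ h₂ δ₁n δ₂n s' δold δ₂ ζ₂')
      (ht : t.1 = (s, a, (h₁, h₂), (δ₁n, δ₂n), s')) (h2 : QStep h₂ δ₂n δ₂ ζ₂') :
      Rel Q (s', δ₁n ++ δold, ζ₂') (.qB t, [hsh] ++ enc δ₁n ++ enc δold ++ [dol] ++ enc δ₂)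
  | r_qC (t : Tr Q) (s a h δ₁n δ₂n s' δ₁' ζa ζb)
      (ht : t.1 = (s, a, h, (δ₁n, δ₂n), s')) :
      Rel Q (s', δ₁', δ₂n ++ (ζa ++ ζb)) (.qC t, enc ζb ++ [hsh] ++ enc δ₁' ++ [dol] ++ enc ζa)

/-- accuracy of the info component w.r.t. the second queue -/
def Acc (i : Option (Option D)) (δ₂ : List D) : Prop :=
  (i = some none ∧ δ₂ = []) ∨ ∃ ζ d, i = some (some d) ∧ δ₂ = ζ ++ [d]

lemma pstep {Q : QA2 S A D} {m₁ : MSt Q} {a h δ m₂ w₁ w₂}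
    (hm : Mtr Q m₁ a h δ m₂) (hq : QStep h δ w₁ w₂) :
    (M Q).proc.tr (m₁, w₁) a (m₂, w₂) := ⟨h, δ, hm, hq⟩

lemma qdata {D'} (v : D') (δ ζ : List D') {w w' : List D'}
    (h1 : w = ζ ++ [v]) (h2 : w' = δ ++ ζ) :
    QStep (Head.data v) δ w w' := by subst h1; subst h2; exact QStep.data v δ ζ

lemma qstar {D'} (δ : List D') {w w' : List D'} (h2 : w' = δ ++ w) :
    QStep Head.star δ w w' := by subst h2; exact QStep.star δ w

lemma rot (Q : QA2 S A D) (st : MSt Q)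
    (hl : ∀ x : D, Mtr Q st none (.data (Sum.inl x)) [Sum.inl x] st) :
    ∀ (γ : List D) (W), (M Q).proc.tauStar (st, W ++ enc γ) (st, enc γ ++ W) := by
  intro γ
  induction γ using List.reverseRecOn with
  | nil => intro W; simp only [enc_nil, List.append_nil, List.nil_append]; exact .refl
  | append_singleton γ' x ih =>
    intro W
    refine Relation.ReflTransGen.head
      (pstep (hl x) (qdata (Sum.inl x) [Sum.inl x] (W ++ enc γ') (by simp) rfl)) ?_
    have := ih ([Sum.inl x] ++ W)
    simp only [List.append_assoc, enc_concat, enc_cons, List.cons_append, List.nil_append,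
      List.singleton_append] at this ⊢
    exact this

lemma tauTrans {Q : QA2 S A D} {x y z : MSt Q × List (Dd D)}
    (h1 : (M Q).proc.tauStar x y) (h2 : (M Q).proc.tauStar y z) :
    (M Q).proc.tauStar x z := Relation.ReflTransGen.trans h1 h2

lemma tauCast {Q : QA2 S A D} {x : MSt Q × List (Dd D)} {m : MSt Q} {w w' : List (Dd D)}
    (h1 : (M Q).proc.tauStar x (m, w)) (h2 : w = w') :
    (M Q).proc.tauStar x (m, w') := h2 ▸ h1

lemma sc2done (Q : QA2 S A D) (s : S) (δ₁ δ₂ : List D) :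
    ∃ i, Acc i δ₂ ∧ (M Q).proc.tauStar ((.sc2 s : MSt Q), [hsh] ++ enc δ₁ ++ [dol] ++ enc δ₂)
      ((.rest s i : MSt Q), enc δ₂ ++ [hsh] ++ enc δ₁) := by
  rcases List.eq_nil_or_concat' δ₂ with rfl | ⟨ζ, d, rfl⟩
  · refine ⟨some none, Or.inl ⟨rfl, rfl⟩, Relation.ReflTransGen.single ?_⟩
    exact pstep (Mtr.t_sc2_emp s) (qdata dol [] ([hsh] ++ enc δ₁) (by simp) (by simp))
  · refine ⟨some (some d), Or.inr ⟨ζ, d, rfl, rfl⟩, ?_⟩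
    refine Relation.ReflTransGen.head
      (pstep (Mtr.t_sc2_data s d)
        (qdata (Sum.inl d) [Sum.inl d] ([hsh] ++ enc δ₁ ++ [dol] ++ enc ζ) (by simp) rfl)) ?_
    refine tauTrans (tauCast (rot Q (.sc3 s d) (fun x => Mtr.t_sc3_rot s d x) ζ
        ([Sum.inl d] ++ ([hsh] ++ (enc δ₁ ++ [dol])))) rfl) ?_
    refine Relation.ReflTransGen.single ?_
    exact pstep (Mtr.t_sc3_dol s d)
      (qdata dol [] (enc ζ ++ ([Sum.inl d] ++ [hsh] ++ enc δ₁)) (by simp) (by simp))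

lemma restUdone (Q : QA2 S A D) (s : S) (δ₁ δ₂ : List D) :
    ∃ i, Acc i δ₂ ∧ (M Q).proc.tauStar ((.rest s none : MSt Q), enc δ₂ ++ [hsh] ++ enc δ₁)
      ((.rest s i : MSt Q), enc δ₂ ++ [hsh] ++ enc δ₁) := by
  obtain ⟨i, hacc, htail⟩ := sc2done Q s δ₁ δ₂
  refine ⟨i, hacc, ?_⟩
  refine Relation.ReflTransGen.head (pstep (Mtr.t_scan s) (qstar [dol] rfl)) ?_
  refine tauTrans (tauCast (rot Q (.sc1 s) (fun x => Mtr.t_sc1_rot s x) δ₁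
      ([dol] ++ (enc δ₂ ++ [hsh]))) rfl) ?_
  exact tauTrans (Relation.ReflTransGen.single
    (pstep (Mtr.t_sc1_hash s)
      (qdata hsh [hsh] (enc δ₁ ++ ([dol] ++ enc δ₂)) (by simp) (by simp)))) htail

end TQ
namespace TQ

variable {S A D : Type}

lemma qCdone (Q : QA2 S A D) (t : Tr Q) (s : S) (a : Option A) (h : Head D × Head D)
    (δ₁n δ₂n : List D) (s' : S) (δ₁' ζa ζb : List D)
    (ht : t.1 = (s, a, h, (δ₁n, δ₂n), s')) :
    (M Q).proc.tauStar ((.qC t : MSt Q), enc ζb ++ [hsh] ++ enc δ₁' ++ [dol] ++ enc ζa)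
      ((.rest s' none : MSt Q), enc (δ₂n ++ (ζa ++ ζb)) ++ [hsh] ++ enc δ₁') := by
  refine tauTrans (rot Q (.qC t) (fun x => Mtr.t_qC_rot t x) ζa
      (enc ζb ++ [hsh] ++ enc δ₁' ++ [dol])) ?_
  refine Relation.ReflTransGen.single ?_
  exact pstep (Mtr.t_qC_dol t s a h δ₁n δ₂n s' ht)
    (qdata dol (enc δ₂n) (enc ζa ++ (enc ζb ++ [hsh] ++ enc δ₁')) (by simp) (by simp))

lemma qBdone (Q : QA2 S A D) (t : Tr Q) (s : S) (a : Option A) (h₁ h₂ : Head D)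
    (δ₁n δ₂n : List D) (s' : S) (δold δ₂ ζ₂' : List D)
    (ht : t.1 = (s, a, (h₁, h₂), (δ₁n, δ₂n), s')) (h2 : QStep h₂ δ₂n δ₂ ζ₂') :
    (M Q).proc.tauStar ((.qB t : MSt Q), [hsh] ++ enc δ₁n ++ enc δold ++ [dol] ++ enc δ₂)
      ((.rest s' none : MSt Q), enc ζ₂' ++ [hsh] ++ enc (δ₁n ++ δold)) := by
  cases h2 with
  | emp =>
      refine Relation.ReflTransGen.single ?_
      exact pstep (Mtr.t_qB_emp t s a h₁ δ₁n δ₂n s' ht)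
        (qdata dol (enc δ₂n) ([hsh] ++ enc δ₁n ++ enc δold) (by simp) (by simp))
  | data d δr ζr =>
      refine Relation.ReflTransGen.head
        (pstep (Mtr.t_qB_data t s a h₁ d δ₁n δ₂n s' ht)
          (qdata (Sum.inl d) []
            ([hsh] ++ enc (δ₁n ++ δold) ++ [dol] ++ enc ζr)
            (w' := enc ([] : List D) ++ [hsh] ++ enc (δ₁n ++ δold) ++ [dol] ++ enc ζr)
            (by simp) (by simp))) ?_
      exact tauCast (qCdone Q t s a (h₁, Head.data d) δ₁n δ₂n s' (δ₁n ++ δold) ζr [] ht)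
        (by simp)
  | star δr ζr =>
      refine Relation.ReflTransGen.head
        (pstep (Mtr.t_qB_star t s a h₁ δ₁n δ₂n s' ht)
          (qstar []
            (w := [hsh] ++ enc δ₁n ++ enc δold ++ [dol] ++ enc δ₂)
            (w' := enc ([] : List D) ++ [hsh] ++ enc (δ₁n ++ δold) ++ [dol] ++ enc δ₂)
            (by simp))) ?_
      exact tauCast (qCdone Q t s a (h₁, Head.star) δ₁n δ₂n s' (δ₁n ++ δold) δ₂ [] ht)
        (by simp)

lemma qAdone (Q : QA2 S A D) (t : Tr Q) (s : S) (a : Option A) (h₁ h₂ : Head D)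
    (δ₁n δ₂n : List D) (s' : S) (δa δb δ₂ ζ₂' : List D)
    (ht : t.1 = (s, a, (h₁, h₂), (δ₁n, δ₂n), s')) (h2 : QStep h₂ δ₂n δ₂ ζ₂') :
    (M Q).proc.tauStar ((.qA t : MSt Q), enc δb ++ [dol] ++ enc δ₂ ++ [hsh] ++ enc δa)
      ((.rest s' none : MSt Q), enc ζ₂' ++ [hsh] ++ enc (δ₁n ++ (δa ++ δb))) := by
  refine tauTrans (rot Q (.qA t) (fun x => Mtr.t_qA_rot t x) δa
      (enc δb ++ [dol] ++ enc δ₂ ++ [hsh])) ?_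
  refine Relation.ReflTransGen.head
    (pstep (Mtr.t_qA_hash t s a h₁ h₂ δ₁n δ₂n s' ht)
      (qdata hsh ([hsh] ++ enc δ₁n)
        (enc (δa ++ δb) ++ [dol] ++ enc δ₂)
        (w' := [hsh] ++ enc δ₁n ++ enc (δa ++ δb) ++ [dol] ++ enc δ₂)
        (by simp) (by simp))) ?_
  exact qBdone Q t s a h₁ h₂ δ₁n δ₂n s' (δa ++ δb) δ₂ ζ₂' ht h2

lemma reach (Q : QA2 S A D) : ∀ {c m}, Rel Q c m →
    ∃ i, Acc i c.2.2 ∧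
      (M Q).proc.tauStar m ((.rest c.1 i : MSt Q), enc c.2.2 ++ [hsh] ++ enc c.2.1) := by
  intro c m h
  cases h with
  | r_init =>
      obtain ⟨i, hacc, ht⟩ := restUdone Q Q.init [] []
      exact ⟨i, hacc, Relation.ReflTransGen.head
        (pstep Mtr.t_init (QStep.emp [hsh])) (by simpa [LTS.tauStar] using ht)⟩
  | r_rest_u s δ₁ δ₂ => exact restUdone Q s δ₁ δ₂
  | r_rest_e s δ₁ =>
      exact ⟨some none, Or.inl ⟨rfl, rfl⟩, tauCast Relation.ReflTransGen.refl (by simp)⟩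
  | r_rest_d s δ₁ ζ d =>
      exact ⟨some (some d), Or.inr ⟨ζ, d, rfl, rfl⟩, Relation.ReflTransGen.refl⟩
  | r_sc1 s δa δb δ₂ =>
      obtain ⟨i, hacc, ht⟩ := sc2done Q s (δa ++ δb) δ₂
      refine ⟨i, hacc, ?_⟩
      refine tauTrans (rot Q (.sc1 s) (fun x => Mtr.t_sc1_rot s x) δa
        (enc δb ++ [dol] ++ enc δ₂ ++ [hsh])) ?_
      refine Relation.ReflTransGen.head
        (pstep (Mtr.t_sc1_hash s)
          (qdata hsh [hsh] (enc (δa ++ δb) ++ [dol] ++ enc δ₂)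
            (w' := [hsh] ++ enc (δa ++ δb) ++ [dol] ++ enc δ₂) (by simp) (by simp))) ?_
      exact ht
  | r_sc2 s δ₁ δ₂ => exact sc2done Q s δ₁ δ₂
  | r_sc3 s δ₁ ζa ζb d =>
      refine ⟨some (some d), Or.inr ⟨ζa ++ ζb, d, rfl, by simp⟩, ?_⟩
      refine tauTrans (rot Q (.sc3 s d) (fun x => Mtr.t_sc3_rot s d x) ζa
        (enc ζb ++ [Sum.inl d] ++ [hsh] ++ enc δ₁ ++ [dol])) ?_
      refine Relation.ReflTransGen.single ?_
      exact pstep (Mtr.t_sc3_dol s d)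
        (qdata dol [] (enc ζa ++ (enc ζb ++ [Sum.inl d] ++ [hsh] ++ enc δ₁))
          (by simp) (by simp))
  | r_qA t s a h₁ h₂ δ₁n δ₂n s' δa δb δ₂ ζ₂' ht h2 =>
      obtain ⟨i, hacc, hrest⟩ := restUdone Q s' (δ₁n ++ (δa ++ δb)) ζ₂'
      exact ⟨i, hacc, tauTrans (qAdone Q t s a h₁ h₂ δ₁n δ₂n s' δa δb δ₂ ζ₂' ht h2) hrest⟩
  | r_qB t s a h₁ h₂ δ₁n δ₂n s' δold δ₂ ζ₂' ht h2 =>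
      obtain ⟨i, hacc, hrest⟩ := restUdone Q s' (δ₁n ++ δold) ζ₂'
      exact ⟨i, hacc, tauTrans (qBdone Q t s a h₁ h₂ δ₁n δ₂n s' δold δ₂ ζ₂' ht h2) hrest⟩
  | r_qC t s a hh δ₁n δ₂n s' δ₁' ζa ζb ht =>
      obtain ⟨i, hacc, hrest⟩ := restUdone Q s' δ₁' (δ₂n ++ (ζa ++ ζb))
      exact ⟨i, hacc, tauTrans (qCdone Q t s a hh δ₁n δ₂n s' δ₁' ζa ζb ht) hrest⟩

end TQ
namespace TQ

variable {S A D : Type}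

lemma compat_of {h₂ : Head D} {δ₂n δ₂ δ₂' : List D} {i}
    (h2 : QStep h₂ δ₂n δ₂ δ₂') (hacc : Acc i δ₂) : compat h₂ i := by
  cases h2 with
  | star _ _ => trivial
  | emp _ =>
      rcases hacc with ⟨hi, _⟩ | ⟨ζ, d, hi, hd⟩
      · exact hi
      · exact absurd hd.symm (by simp)
  | data d δ ζ =>
      rcases hacc with ⟨hi, hd⟩ | ⟨ζ', d', hi, hd⟩
      · exact absurd hd (by simp)
      · obtain ⟨-, h2⟩ := List.append_inj' hd.symm rfl
        obtain rfl : d' = d := by simpa using h2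
        exact hi

lemma relRest {Q : QA2 S A D} {s : S} {δ₁ δ₂ : List D} {i} (hacc : Acc i δ₂) :
    Rel Q (s, δ₁, δ₂) (.rest s i, enc δ₂ ++ [hsh] ++ enc δ₁) := by
  rcases hacc with ⟨rfl, rfl⟩ | ⟨ζ, d, rfl, rfl⟩
  · simpa using Rel.r_rest_e s δ₁
  · exact Rel.r_rest_d s δ₁ ζ d

lemma fire (Q : QA2 S A D) {s : S} {a : Option A} {h₁ h₂ : Head D}
    {δ₁n δ₂n δ₁ δ₂ δ₁' δ₂' : List D} {s' : S} {i}
    (htr : Q.tr s a (h₁, h₂) (δ₁n, δ₂n) s')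
    (h1 : QStep h₁ δ₁n δ₁ δ₁') (h2 : QStep h₂ δ₂n δ₂ δ₂') (hacc : Acc i δ₂) :
    ∃ m', (M Q).proc.tr ((.rest s i : MSt Q), enc δ₂ ++ [hsh] ++ enc δ₁) a m' ∧
      Rel Q (s', δ₁', δ₂') m' := by
  have hc := compat_of h2 hacc
  cases h1 with
  | emp =>
      refine ⟨((.qB ⟨(s, a, (.emp, h₂), (δ₁n, δ₂n), s'), htr⟩ : MSt Q),
        ([hsh] ++ enc δ₁n ++ [dol]) ++ enc δ₂), ?_, ?_⟩
      · exact pstep (Mtr.t_fire_emp _ i s a h₂ δ₁n δ₂n s' rfl hc)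
          (qdata hsh ([hsh] ++ enc δ₁n ++ [dol]) (enc δ₂) (by simp) (by simp))
      · simpa using Rel.r_qB ⟨(s, a, (.emp, h₂), (δ₁n, δ₂n), s'), htr⟩
          s a Head.emp h₂ δ₁n δ₂n s' [] δ₂ δ₂' rfl h2
  | data d δdum ζ =>
      refine ⟨((.qA ⟨(s, a, (.data d, h₂), (δ₁n, δ₂n), s'), htr⟩ : MSt Q),
        [dol] ++ (enc δ₂ ++ [hsh] ++ enc ζ)), ?_, ?_⟩
      · exact pstep (Mtr.t_fire_data _ i s a h₂ d δ₁n δ₂n s' rfl hc)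
          (qdata (Sum.inl d) [dol] (enc δ₂ ++ [hsh] ++ enc ζ) (by simp) rfl)
      · simpa using Rel.r_qA ⟨(s, a, (.data d, h₂), (δ₁n, δ₂n), s'), htr⟩
          s a (Head.data d) h₂ δ₁n δ₂n s' ζ [] δ₂ δ₂' rfl h2
  | star δdum ζdum =>
      refine ⟨((.qA ⟨(s, a, (.star, h₂), (δ₁n, δ₂n), s'), htr⟩ : MSt Q),
        [dol] ++ (enc δ₂ ++ [hsh] ++ enc δ₁)), ?_, ?_⟩
      · exact pstep (Mtr.t_fire_star _ i s a h₂ δ₁n δ₂n s' rfl hc)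
          (qstar [dol] rfl)
      · simpa using Rel.r_qA ⟨(s, a, (.star, h₂), (δ₁n, δ₂n), s'), htr⟩
          s a Head.star h₂ δ₁n δ₂n s' δ₁ [] δ₂ δ₂' rfl h2

lemma under_rel {Q : QA2 S A D} {c m} (h : Rel Q c m) : under Q m.1 = c.1 := by
  cases h with
  | r_qA t s a h₁ h₂ δ₁n δ₂n s' δa δb δ₂ ζ₂' ht h2 => simp [under, ht]
  | r_qB t s a h₁ h₂ δ₁n δ₂n s' δold δ₂ ζ₂' ht h2 => simp [under, ht]
  | r_qC t s a hh δ₁n δ₂n s' δ₁' ζa ζb ht => simp [under, ht]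
  | _ => rfl

lemma dir1 (Q : QA2 S A D) : ∀ c m, Rel Q c m →
    (∀ a c', Q.proc.tr c a c' → ∃ m'' m', (M Q).proc.tauStar m m'' ∧
      (M Q).proc.optStep m'' a m' ∧ Rel Q c m'' ∧ Rel Q c' m') ∧
    (Q.proc.fin c → ∃ m', (M Q).proc.tauStar m m' ∧ (M Q).proc.fin m') := by
  rintro ⟨s, δ₁, δ₂⟩ m hR
  constructor
  · rintro a ⟨s', δ₁', δ₂'⟩ ⟨⟨h₁, h₂⟩, ⟨δ₁n, δ₂n⟩, htr, hq1, hq2⟩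
    obtain ⟨i, hacc, hreach⟩ := reach Q hR
    obtain ⟨m', hstep, hrel⟩ := fire Q htr hq1 hq2 hacc
    exact ⟨_, m', hreach, Or.inl hstep, relRest hacc, hrel⟩
  · intro hfin
    refine ⟨m, Relation.ReflTransGen.refl, ?_⟩
    show Q.fin (under Q m.1)
    rw [under_rel hR]
    exact hfin

end TQ
namespace TQ

variable {S A D : Type}

lemma qstep_data_inv {D'} {v : D'} {δ w w' : List D'} (h : QStep (Head.data v) δ w w') :
    ∃ ζ, w = ζ ++ [v] ∧ w' = δ ++ ζ := by cases h; exact ⟨_, rfl, rfl⟩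

lemma qstep_star_inv {D'} {δ w w' : List D'} (h : QStep Head.star δ w w') :
    w' = δ ++ w := by cases h; rfl

lemma qstep_emp_inv {D'} {δ w w' : List D'} (h : QStep Head.emp δ w w') :
    w = [] ∧ w' = δ := by cases h; exact ⟨rfl, rfl⟩

lemma concat_inj {α : Type _} {X Y : List α} {u v : α} (h : X ++ [u] = Y ++ [v]) :
    X = Y ∧ u = v := by
  have := List.append_inj' h rfl
  exact ⟨this.1, by simpa using this.2⟩

lemma inv_enc_concat {W : List (Dd D)} {δ : List D} {ζ : List (Dd D)} {v : Dd D}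
    (h : W ++ enc δ = ζ ++ [v]) :
    (δ = [] ∧ W = ζ ++ [v]) ∨ ∃ δ' d, δ = δ' ++ [d] ∧ v = Sum.inl d ∧ ζ = W ++ enc δ' := by
  rcases List.eq_nil_or_concat' δ with rfl | ⟨δ', d, rfl⟩
  · exact Or.inl ⟨rfl, by simpa using h⟩
  · right
    have h' : (W ++ enc δ') ++ [Sum.inl d] = ζ ++ [v] := by simpa using h
    obtain ⟨h1, h2⟩ := concat_inj h'
    exact ⟨δ', d, rfl, h2.symm, h1.symm⟩

lemma respTau {Q : QA2 S A D} {c : S × List D × List D} {m m' : MSt Q × List (Dd D)}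
    (h : Rel Q c m) (h' : Rel Q c m') :
    ∃ c'' c', Q.proc.tauStar c c'' ∧ Q.proc.optStep c'' none c' ∧ Rel Q c'' m ∧ Rel Q c' m' :=
  ⟨c, c, Relation.ReflTransGen.refl, Or.inr ⟨rfl, rfl⟩, h, h'⟩

lemma respAct {Q : QA2 S A D} {c c' : S × List D × List D} {a : Option A}
    {m m' : MSt Q × List (Dd D)}
    (h : Rel Q c m) (hstep : Q.proc.tr c a c') (h' : Rel Q c' m') :
    ∃ c'' c₂, Q.proc.tauStar c c'' ∧ Q.proc.optStep c'' a c₂ ∧ Rel Q c'' m ∧ Rel Q c₂ m' :=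
  ⟨c, c', Relation.ReflTransGen.refl, Or.inl hstep, h, h'⟩

lemma trOf {Q : QA2 S A D} (t : Tr Q) {s a h δn s'} (ht : t.1 = (s, a, h, δn, s')) :
    Q.tr s a h δn s' := by
  have htr := t.2
  rw [ht] at htr
  exact htr

end TQ
namespace TQ

variable {S A D : Type}

lemma fireRespData {Q : QA2 S A D} (t : Tr Q) {s a h₂ d δ₁n δ₂n s'}
    (ht : t.1 = (s, a, (.data d, h₂), (δ₁n, δ₂n), s'))
    {δ₁ δ₂ δ₂' : List D} {i} {w w' : List (Dd D)}
    (hww : w = enc δ₂ ++ [hsh] ++ enc δ₁)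
    (h2 : QStep h₂ δ₂n δ₂ δ₂')
    (hrel : Rel Q (s, δ₁, δ₂) (.rest s i, w))
    (hq : QStep (.data (Sum.inl d)) [dol] w w') :
    ∃ c'' c', Q.proc.tauStar (s, δ₁, δ₂) c'' ∧ Q.proc.optStep c'' a c' ∧
      Rel Q c'' ((.rest s i : MSt Q), w) ∧ Rel Q c' ((.qA t : MSt Q), w') := by
  subst hww
  obtain ⟨ζm, hw, rfl⟩ := qstep_data_inv hq
  rcases inv_enc_concat hw with ⟨rfl, hW⟩ | ⟨δ₁', d', rfl, hv, rfl⟩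
  · exact absurd (concat_inj hW).2 (by simp [hsh])
  · obtain rfl : d = d' := by simpa using hv
    refine respAct (c' := (s', δ₁n ++ δ₁', δ₂')) hrel
      ⟨(.data d, h₂), (δ₁n, δ₂n), trOf t ht, QStep.data d δ₁n δ₁', h2⟩ ?_
    simpa using Rel.r_qA t s a (.data d) h₂ δ₁n δ₂n s' δ₁' [] δ₂ δ₂' ht h2

lemma fireRespStar {Q : QA2 S A D} (t : Tr Q) {s a h₂ δ₁n δ₂n s'}
    (ht : t.1 = (s, a, (.star, h₂), (δ₁n, δ₂n), s'))
    {δ₁ δ₂ δ₂' : List D} {i} {w w' : List (Dd D)}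
    (hww : w = enc δ₂ ++ [hsh] ++ enc δ₁)
    (h2 : QStep h₂ δ₂n δ₂ δ₂')
    (hrel : Rel Q (s, δ₁, δ₂) (.rest s i, w))
    (hq : QStep .star [dol] w w') :
    ∃ c'' c', Q.proc.tauStar (s, δ₁, δ₂) c'' ∧ Q.proc.optStep c'' a c' ∧
      Rel Q c'' ((.rest s i : MSt Q), w) ∧ Rel Q c' ((.qA t : MSt Q), w') := by
  subst hww
  obtain rfl := qstep_star_inv hq
  refine respAct (c' := (s', δ₁n ++ δ₁, δ₂')) hrel
    ⟨(.star, h₂), (δ₁n, δ₂n), trOf t ht, QStep.star δ₁n δ₁, h2⟩ ?_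
  simpa using Rel.r_qA t s a .star h₂ δ₁n δ₂n s' δ₁ [] δ₂ δ₂' ht h2

lemma fireRespEmp {Q : QA2 S A D} (t : Tr Q) {s a h₂ δ₁n δ₂n s'}
    (ht : t.1 = (s, a, (.emp, h₂), (δ₁n, δ₂n), s'))
    {δ₁ δ₂ δ₂' : List D} {i} {w w' : List (Dd D)}
    (hww : w = enc δ₂ ++ [hsh] ++ enc δ₁)
    (h2 : QStep h₂ δ₂n δ₂ δ₂')
    (hrel : Rel Q (s, δ₁, δ₂) (.rest s i, w))
    (hq : QStep (.data hsh) ([hsh] ++ enc δ₁n ++ [dol]) w w') :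
    ∃ c'' c', Q.proc.tauStar (s, δ₁, δ₂) c'' ∧ Q.proc.optStep c'' a c' ∧
      Rel Q c'' ((.rest s i : MSt Q), w) ∧ Rel Q c' ((.qB t : MSt Q), w') := by
  subst hww
  obtain ⟨ζm, hw, rfl⟩ := qstep_data_inv hq
  rcases inv_enc_concat hw with ⟨rfl, hW⟩ | ⟨δ₁', d', rfl, hv, rfl⟩
  · obtain rfl := (concat_inj hW).1
    refine respAct (c' := (s', δ₁n, δ₂')) hrel
      ⟨(.emp, h₂), (δ₁n, δ₂n), trOf t ht, QStep.emp δ₁n, h2⟩ ?_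
    simpa using Rel.r_qB t s a .emp h₂ δ₁n δ₂n s' [] δ₂ δ₂' ht h2
  · exact absurd hv (by simp [hsh])

end TQ
namespace TQ

variable {S A D : Type}

lemma dir2 (Q : QA2 S A D) : ∀ c m, Rel Q c m →
    (∀ a m', (M Q).proc.tr m a m' →
      ∃ c'' c', Q.proc.tauStar c c'' ∧ Q.proc.optStep c'' a c' ∧
        Rel Q c'' m ∧ Rel Q c' m') ∧
    ((M Q).proc.fin m → ∃ c', Q.proc.tauStar c c' ∧ Q.proc.fin c') := by
  intro c m hR
  refine ⟨?_, ?_⟩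
  case refine_2 =>
    intro hfin
    refine ⟨c, Relation.ReflTransGen.refl, ?_⟩
    show Q.fin c.1
    rw [← under_rel hR]
    exact hfin
  rintro a ⟨m1', w'⟩ ⟨h, δ, hM, hq⟩
  cases hR with
  | r_init =>
      cases hM
      obtain ⟨-, rfl⟩ := qstep_emp_inv hq
      exact respTau Rel.r_init (by simpa using Rel.r_rest_u Q.init [] [])
  | r_rest_u s δ₁ δ₂ =>
      cases hM with
      | t_scan =>
          obtain rfl := qstep_star_inv hq
          exact respTau (Rel.r_rest_u s δ₁ δ₂) (by simpa using Rel.r_sc1 s δ₁ [] δ₂)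
      | t_fire_data t i s₂ a₂ h₂ d δ₁n δ₂n s₂' ht hc =>
          cases h₂ with
          | emp => exact absurd hc (by simp [compat])
          | data d₂ => exact absurd hc (by simp [compat])
          | star =>
              exact fireRespData t ht rfl (QStep.star δ₂n δ₂) (Rel.r_rest_u s δ₁ δ₂) hq
      | t_fire_star t i s₂ a₂ h₂ δ₁n δ₂n s₂' ht hc =>
          cases h₂ with
          | emp => exact absurd hc (by simp [compat])
          | data d₂ => exact absurd hc (by simp [compat])
          | star =>
              exact fireRespStar t ht rfl (QStep.star δ₂n δ₂) (Rel.r_rest_u s δ₁ δ₂) hq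
      | t_fire_emp t i s₂ a₂ h₂ δ₁n δ₂n s₂' ht hc =>
          cases h₂ with
          | emp => exact absurd hc (by simp [compat])
          | data d₂ => exact absurd hc (by simp [compat])
          | star =>
              exact fireRespEmp t ht rfl (QStep.star δ₂n δ₂) (Rel.r_rest_u s δ₁ δ₂) hq
  | r_rest_e s δ₁ =>
      cases hM with
      | t_fire_data t i s₂ a₂ h₂ d δ₁n δ₂n s₂' ht hc =>
          cases h₂ with
          | data d₂ => exact absurd hc (by simp [compat])
          | emp =>
              exact fireRespData t ht (by simp) (QStep.emp δ₂n) (Rel.r_rest_e s δ₁) hq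
          | star =>
              exact fireRespData t ht (by simp) (QStep.star δ₂n []) (Rel.r_rest_e s δ₁) hq
      | t_fire_star t i s₂ a₂ h₂ δ₁n δ₂n s₂' ht hc =>
          cases h₂ with
          | data d₂ => exact absurd hc (by simp [compat])
          | emp =>
              exact fireRespStar t ht (by simp) (QStep.emp δ₂n) (Rel.r_rest_e s δ₁) hq
          | star =>
              exact fireRespStar t ht (by simp) (QStep.star δ₂n []) (Rel.r_rest_e s δ₁) hq
      | t_fire_emp t i s₂ a₂ h₂ δ₁n δ₂n s₂' ht hc =>
          cases h₂ with
          | data d₂ => exact absurd hc (by simp [compat])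
          | emp =>
              exact fireRespEmp t ht (by simp) (QStep.emp δ₂n) (Rel.r_rest_e s δ₁) hq
          | star =>
              exact fireRespEmp t ht (by simp) (QStep.star δ₂n []) (Rel.r_rest_e s δ₁) hq
  | r_rest_d s δ₁ ζ₀ d₀ =>
      cases hM with
      | t_fire_data t i s₂ a₂ h₂ d δ₁n δ₂n s₂' ht hc =>
          cases h₂ with
          | emp => exact absurd hc (by simp [compat])
          | data d₂ =>
              obtain rfl : d₀ = d₂ := by simpa [compat] using hc
              exact fireRespData t ht rfl (QStep.data d₀ δ₂n ζ₀) (Rel.r_rest_d s δ₁ ζ₀ d₀) hq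
          | star =>
              exact fireRespData t ht rfl (QStep.star δ₂n (ζ₀ ++ [d₀])) (Rel.r_rest_d s δ₁ ζ₀ d₀) hq
      | t_fire_star t i s₂ a₂ h₂ δ₁n δ₂n s₂' ht hc =>
          cases h₂ with
          | emp => exact absurd hc (by simp [compat])
          | data d₂ =>
              obtain rfl : d₀ = d₂ := by simpa [compat] using hc
              exact fireRespStar t ht rfl (QStep.data d₀ δ₂n ζ₀) (Rel.r_rest_d s δ₁ ζ₀ d₀) hq
          | star =>
              exact fireRespStar t ht rfl (QStep.star δ₂n (ζ₀ ++ [d₀])) (Rel.r_rest_d s δ₁ ζ₀ d₀) hq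
      | t_fire_emp t i s₂ a₂ h₂ δ₁n δ₂n s₂' ht hc =>
          cases h₂ with
          | emp => exact absurd hc (by simp [compat])
          | data d₂ =>
              obtain rfl : d₀ = d₂ := by simpa [compat] using hc
              exact fireRespEmp t ht rfl (QStep.data d₀ δ₂n ζ₀) (Rel.r_rest_d s δ₁ ζ₀ d₀) hq
          | star =>
              exact fireRespEmp t ht rfl (QStep.star δ₂n (ζ₀ ++ [d₀])) (Rel.r_rest_d s δ₁ ζ₀ d₀) hq
  | r_sc1 s δa δb δ₂ =>
      cases hM with
      | t_sc1_rot s₂ x =>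
          obtain ⟨ζm, hw, rfl⟩ := qstep_data_inv hq
          rcases inv_enc_concat hw with ⟨rfl, hW⟩ | ⟨δa', d', rfl, hv, rfl⟩
          · exact absurd (concat_inj hW).2 (by simp [hsh])
          · obtain rfl : x = d' := by simpa using hv
            exact respTau (Rel.r_sc1 s (δa' ++ [x]) δb δ₂)
              (by simpa using Rel.r_sc1 s δa' (x :: δb) δ₂)
      | t_sc1_hash s₂ =>
          obtain ⟨ζm, hw, rfl⟩ := qstep_data_inv hq
          rcases inv_enc_concat hw with ⟨rfl, hW⟩ | ⟨δa', d', rfl, hv, rfl⟩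
          · obtain rfl := (concat_inj hW).1
            exact respTau (by simpa using Rel.r_sc1 s [] δb δ₂)
              (by simpa using Rel.r_sc2 s δb δ₂)
          · exact absurd hv (by simp [hsh])
  | r_sc2 s δ₁ δ₂ =>
      cases hM with
      | t_sc2_emp s₂ =>
          obtain ⟨ζm, hw, rfl⟩ := qstep_data_inv hq
          rcases inv_enc_concat hw with ⟨rfl, hW⟩ | ⟨δ₂', d', rfl, hv, rfl⟩
          · obtain rfl := (concat_inj hW).1
            exact respTau (by simpa using Rel.r_sc2 s δ₁ [])
              (by simpa using Rel.r_rest_e s δ₁)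
          · exact absurd hv (by simp [dol])
      | t_sc2_data s₂ d =>
          obtain ⟨ζm, hw, rfl⟩ := qstep_data_inv hq
          rcases inv_enc_concat hw with ⟨rfl, hW⟩ | ⟨δ₂', d', rfl, hv, rfl⟩
          · exact absurd (concat_inj hW).2 (by simp [dol])
          · obtain rfl : d = d' := by simpa using hv
            exact respTau (Rel.r_sc2 s δ₁ (δ₂' ++ [d]))
              (by simpa using Rel.r_sc3 s δ₁ δ₂' [] d)
  | r_sc3 s δ₁ ζa ζb d =>
      cases hM with
      | t_sc3_rot s₂ d₂ x =>
          obtain ⟨ζm, hw, rfl⟩ := qstep_data_inv hq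
          rcases inv_enc_concat hw with ⟨rfl, hW⟩ | ⟨ζa', d', rfl, hv, rfl⟩
          · exact absurd (concat_inj hW).2 (by simp [dol])
          · obtain rfl : x = d' := by simpa using hv
            exact respTau (Rel.r_sc3 s δ₁ (ζa' ++ [x]) ζb d)
              (by simpa using Rel.r_sc3 s δ₁ ζa' (x :: ζb) d)
      | t_sc3_dol s₂ d₂ =>
          obtain ⟨ζm, hw, rfl⟩ := qstep_data_inv hq
          rcases inv_enc_concat hw with ⟨rfl, hW⟩ | ⟨ζa', d', rfl, hv, rfl⟩
          · obtain rfl := (concat_inj hW).1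
            exact respTau (by simpa using Rel.r_sc3 s δ₁ [] ζb d)
              (by simpa using Rel.r_rest_d s δ₁ ζb d)
          · exact absurd hv (by simp [dol])
  | r_qA t s a₀ h₁ h₂ δ₁n δ₂n s' δa δb δ₂ ζ₂' ht h2 =>
      cases hM with
      | t_qA_rot t₂ x =>
          obtain ⟨ζm, hw, rfl⟩ := qstep_data_inv hq
          rcases inv_enc_concat hw with ⟨rfl, hW⟩ | ⟨δa', d', rfl, hv, rfl⟩
          · exact absurd (concat_inj hW).2 (by simp [hsh])
          · obtain rfl : x = d' := by simpa using hv
            exact respTau (Rel.r_qA t s a₀ h₁ h₂ δ₁n δ₂n s' (δa' ++ [x]) δb δ₂ ζ₂' ht h2)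
              (by simpa using Rel.r_qA t s a₀ h₁ h₂ δ₁n δ₂n s' δa' (x :: δb) δ₂ ζ₂' ht h2)
      | t_qA_hash t₂ s₂ a₂ h₁₂ h₂₂ δ₁n₂ δ₂n₂ s₂' ht₂ =>
          have hT := ht.symm.trans ht₂
          simp only [Prod.mk.injEq] at hT
          obtain ⟨rfl, rfl, ⟨rfl, rfl⟩, ⟨rfl, rfl⟩, rfl⟩ := hT
          obtain ⟨ζm, hw, rfl⟩ := qstep_data_inv hq
          rcases inv_enc_concat hw with ⟨rfl, hW⟩ | ⟨δa', d', rfl, hv, rfl⟩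
          · obtain rfl := (concat_inj hW).1
            exact respTau (by simpa using Rel.r_qA t s a₀ h₁ h₂ δ₁n δ₂n s' [] δb δ₂ ζ₂' ht h2)
              (by simpa using Rel.r_qB t s a₀ h₁ h₂ δ₁n δ₂n s' δb δ₂ ζ₂' ht h2)
          · exact absurd hv (by simp [hsh])
  | r_qB t s a₀ h₁ h₂ δ₁n δ₂n s' δold δ₂ ζ₂' ht h2 =>
      cases hM with
      | t_qB_data t₂ s₂ a₂ h₁₂ d δ₁n₂ δ₂n₂ s₂' ht₂ =>
          have hT := ht.symm.trans ht₂
          simp only [Prod.mk.injEq] at hT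
          obtain ⟨rfl, rfl, ⟨rfl, rfl⟩, ⟨rfl, rfl⟩, rfl⟩ := hT
          obtain ⟨ζr, rfl, rfl⟩ := qstep_data_inv h2
          obtain ⟨ζm, hw, rfl⟩ := qstep_data_inv hq
          have hw' : ([hsh] ++ enc δ₁n ++ enc δold ++ [dol] ++ enc ζr) ++ [Sum.inl d]
              = w' ++ [Sum.inl d] := by simpa using hw
          obtain rfl := (concat_inj hw').1
          exact respTau
            (Rel.r_qB t s a₀ h₁ (.data d) δ₁n δ₂n s' δold (ζr ++ [d]) (δ₂n ++ ζr) ht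
              (QStep.data d δ₂n ζr))
            (by simpa using Rel.r_qC t s a₀ (h₁, .data d) δ₁n δ₂n s' (δ₁n ++ δold) ζr [] ht)
      | t_qB_star t₂ s₂ a₂ h₁₂ δ₁n₂ δ₂n₂ s₂' ht₂ =>
          have hT := ht.symm.trans ht₂
          simp only [Prod.mk.injEq] at hT
          obtain ⟨rfl, rfl, ⟨rfl, rfl⟩, ⟨rfl, rfl⟩, rfl⟩ := hT
          obtain rfl := qstep_star_inv h2
          obtain rfl := qstep_star_inv hq
          exact respTau
            (Rel.r_qB t s a₀ h₁ .star δ₁n δ₂n s' δold δ₂ (δ₂n ++ δ₂) ht (QStep.star δ₂n δ₂))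
            (by simpa using Rel.r_qC t s a₀ (h₁, .star) δ₁n δ₂n s' (δ₁n ++ δold) δ₂ [] ht)
      | t_qB_emp t₂ s₂ a₂ h₁₂ δ₁n₂ δ₂n₂ s₂' ht₂ =>
          have hT := ht.symm.trans ht₂
          simp only [Prod.mk.injEq] at hT
          obtain ⟨rfl, rfl, ⟨rfl, rfl⟩, ⟨rfl, rfl⟩, rfl⟩ := hT
          obtain ⟨rfl, rfl⟩ := qstep_emp_inv h2
          obtain ⟨ζm, hw, rfl⟩ := qstep_data_inv hq
          have hw' : ([hsh] ++ enc δ₁n ++ enc δold) ++ [dol] = ζm ++ [dol] := by simpa using hw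
          obtain rfl := (concat_inj hw').1
          exact respTau
            (by simpa using Rel.r_qB t s a₀ h₁ .emp δ₁n ζ₂' s' δold [] ζ₂' ht (QStep.emp ζ₂'))
            (by simpa using Rel.r_rest_u s' (δ₁n ++ δold) ζ₂')
  | r_qC t s a₀ hh δ₁n δ₂n s' δ₁' ζa ζb ht =>
      cases hM with
      | t_qC_rot t₂ x =>
          obtain ⟨ζm, hw, rfl⟩ := qstep_data_inv hq
          rcases inv_enc_concat hw with ⟨rfl, hW⟩ | ⟨ζa', d', rfl, hv, rfl⟩
          · exact absurd (concat_inj hW).2 (by simp [dol])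
          · obtain rfl : x = d' := by simpa using hv
            exact respTau (Rel.r_qC t s a₀ hh δ₁n δ₂n s' δ₁' (ζa' ++ [x]) ζb ht)
              (by simpa using Rel.r_qC t s a₀ hh δ₁n δ₂n s' δ₁' ζa' (x :: ζb) ht)
      | t_qC_dol t₂ s₂ a₂ hh₂ δ₁n₂ δ₂n₂ s₂' ht₂ =>
          have hT := ht.symm.trans ht₂
          simp only [Prod.mk.injEq] at hT
          obtain ⟨rfl, rfl, rfl, ⟨rfl, rfl⟩, rfl⟩ := hT
          obtain ⟨ζm, hw, rfl⟩ := qstep_data_inv hq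
          rcases inv_enc_concat hw with ⟨rfl, hW⟩ | ⟨ζa', d', rfl, hv, rfl⟩
          · obtain rfl := (concat_inj hW).1
            exact respTau (by simpa using Rel.r_qC t s a₀ hh δ₁n δ₂n s' δ₁' [] ζb ht)
              (by simpa using Rel.r_rest_u s' δ₁' (δ₂n ++ ζb))
          · exact absurd hv (by simp [dol])

end TQ
namespace TQ

variable {S A D : Type}

instance {X : Type} [Finite X] : Finite (Option X) := by
  cases nonempty_fintype X
  exact Finite.of_fintype _

instance {X : Type} [Finite X] : Finite (Head X) :=
  Finite.of_injective (fun h => match h with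
    | .emp => (none : Option (Option X))
    | .star => some none
    | .data d => some (some d))
    (by rintro a b h; cases a <;> cases b <;> simp_all)

def mcode (Q : QA2 S A D) :
    MSt Q → Unit ⊕ (S × Option (Option D)) ⊕ S ⊕ S ⊕ (S × D) ⊕ Tr Q ⊕ Tr Q ⊕ Tr Q
  | .ini => .inl ()
  | .rest s i => .inr (.inl (s, i))
  | .sc1 s => .inr (.inr (.inl s))
  | .sc2 s => .inr (.inr (.inr (.inl s)))
  | .sc3 s d => .inr (.inr (.inr (.inr (.inl (s, d)))))
  | .qA t => .inr (.inr (.inr (.inr (.inr (.inl t)))))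
  | .qB t => .inr (.inr (.inr (.inr (.inr (.inr (.inl t))))))
  | .qC t => .inr (.inr (.inr (.inr (.inr (.inr (.inr t))))))

lemma mcode_inj (Q : QA2 S A D) : Function.Injective (mcode Q) := by
  intro x y h
  cases x <;> cases y <;> simp_all [mcode]

def afun (Q : QA2 S A D) : MSt Q → MSt Q → Option A
  | .rest _ _, .qA t => t.1.2.1
  | .rest _ _, .qB t => t.1.2.1
  | _, _ => none

def dfun (Q : QA2 S A D) : MSt Q → Head (Dd D) → MSt Q → List (Dd D)
  | .ini, _, _ => [hsh]
  | .rest _ _, _, .sc1 _ => [dol]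
  | .rest _ _, _, .qA _ => [dol]
  | .rest _ _, _, .qB t => [hsh] ++ enc t.1.2.2.2.1.1 ++ [dol]
  | .rest _ _, _, _ => []
  | .sc1 _, .data (Sum.inl x), _ => [Sum.inl x]
  | .sc1 _, _, _ => [hsh]
  | .sc2 _, .data (Sum.inl x), _ => [Sum.inl x]
  | .sc2 _, _, _ => []
  | .sc3 _ _, .data (Sum.inl x), _ => [Sum.inl x]
  | .sc3 _ _, _, _ => []
  | .qA _, .data (Sum.inl x), .qA _ => [Sum.inl x]
  | .qA _, _, .qB t => [hsh] ++ enc t.1.2.2.2.1.1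
  | .qA _, _, _ => []
  | .qB t, _, .rest _ _ => enc t.1.2.2.2.1.2
  | .qB _, _, _ => []
  | .qC _, .data (Sum.inl x), .qC _ => [Sum.inl x]
  | .qC t, _, _ => enc t.1.2.2.2.1.2

lemma mFiniteTrans (Q : QA2 S A D) [Finite S] [Finite A] [Finite D] [Finite (Tr Q)] :
    (M Q).FiniteTrans := by
  haveI : Finite (MSt Q) := Finite.of_injective _ (mcode_inj Q)
  have : {x : MSt Q × Option A × Head (Dd D) × List (Dd D) × MSt Q |
      (M Q).tr x.1 x.2.1 x.2.2.1 x.2.2.2.1 x.2.2.2.2} ⊆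
      Set.range (fun p : MSt Q × Head (Dd D) × MSt Q =>
        (p.1, afun Q p.1 p.2.2, p.2.1, dfun Q p.1 p.2.1 p.2.2, p.2.2)) := by
    rintro ⟨m, a, h, δ, m'⟩ hx
    refine ⟨(m, h, m'), ?_⟩
    cases hx with
    | t_init => simp [afun, dfun]
    | t_scan s => simp [afun, dfun]
    | t_sc1_rot s x => simp [afun, dfun]
    | t_sc1_hash s => simp [afun, dfun, hsh]
    | t_sc2_emp s => simp [afun, dfun, dol]
    | t_sc2_data s d => simp [afun, dfun]
    | t_sc3_rot s d x => simp [afun, dfun]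
    | t_sc3_dol s d => simp [afun, dfun, dol]
    | t_fire_data t i s a h₂ d δ₁n δ₂n s' ht hc => simp [afun, dfun, ht]
    | t_fire_star t i s a h₂ δ₁n δ₂n s' ht hc => simp [afun, dfun, ht]
    | t_fire_emp t i s a h₂ δ₁n δ₂n s' ht hc => simp [afun, dfun, ht, hsh]
    | t_qA_rot t x => simp [afun, dfun]
    | t_qA_hash t s a h₁ h₂ δ₁n δ₂n s' ht => simp [afun, dfun, ht, hsh]
    | t_qB_data t s a h₁ d δ₁n δ₂n s' ht => simp [afun, dfun]
    | t_qB_star t s a h₁ δ₁n δ₂n s' ht => simp [afun, dfun]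
    | t_qB_emp t s a h₁ δ₁n δ₂n s' ht => simp [afun, dfun, ht, dol, enc]
    | t_qC_rot t x => simp [afun, dfun]
    | t_qC_dol t s a hh δ₁n δ₂n s' ht => simp [afun, dfun, ht, dol, enc]
  exact Set.Finite.subset (Set.finite_range _) this

end TQ
/-- For every queue automaton with two queues there exists a
single-queue automaton whose process graph is branching bisimilar. -/
theorem two_queues_to_one {S A D : Type} [Finite S] [Finite A] [Finite D]
    (Q : QA2 S A D) (hQ : Q.FiniteTrans) :
    ∃ (S' D' : Type) (_ : Finite S') (_ : Finite D') (M : QA S' A D'),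
      M.FiniteTrans ∧
      BBisimSys Q.proc (Q.init, [], []) M.proc (M.init, []) := by
  haveI : Finite (TQ.Tr Q) := hQ.to_subtype
  exact ⟨TQ.MSt Q, TQ.Dd D, Finite.of_injective _ (TQ.mcode_inj Q), inferInstance,
    TQ.M Q, TQ.mFiniteTrans Q, ⟨TQ.Rel Q, ⟨TQ.dir1 Q, TQ.dir2 Q⟩, TQ.Rel.r_init⟩⟩
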